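/- The connection matrix L of the Möbius–Kantor graph MK, a 40×40 integer matrix indexed by the 16 vertices and 24 edges of MK with L(x,y) = 1 if the simplices x and y intersect and L(x,y) = 0 otherwise, is unimodular with determinant equal to 1 (the Fermi characteristic ∏ₓ (−1)^dim(x) = (+1)¹⁶·(−1)²⁴ of MK). -/

import Mathlib

/-- The underlying relation of the Möbius–Kantor graph `GP(8,3)`. -/
def mkRel (v w : ZMod 8 × Fin 2) : Bool :=
  (v.2 == 0 && w.2 == 0 && (w.1 == v.1 + 1 || v.1 == w.1 + 1)) ||
  ((v.2 == 0 && w.2 == 1 || v.2 == 1 && w.2 == 0) && v.1 == w.1) ||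
  (v.2 == 1 && w.2 == 1 && (w.1 == v.1 + 3 || v.1 == w.1 + 3))

/-- The Möbius–Kantor graph, i.e. the generalized Petersen graph `GP(8,3)`. -/
def MK : SimpleGraph (ZMod 8 × Fin 2) where
  Adj v w := mkRel v w = true
  symm := ⟨by intro v w; revert v w; decide⟩
  loopless := ⟨by intro v; revert v; decide⟩

instance : DecidableRel MK.Adj := fun v w => inferInstanceAs (Decidable (mkRel v w = true))

/-- A simplex of the (one-dimensional) simplicial complex of `MK`: either a vertex
(a singleton) or an edge (a two-element set of adjacent vertices). -/
def IsMKSimplex (s : Finset (ZMod 8 × Fin 2)) : Prop :=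
  s.card = 1 ∨ ∃ a b, MK.Adj a b ∧ s = {a, b}

instance (s : Finset (ZMod 8 × Fin 2)) : Decidable (IsMKSimplex s) := by
  unfold IsMKSimplex; infer_instance

/-- The type of the 40 simplices (16 vertices and 24 edges) of `MK`. -/
def MKSimplex := {s : Finset (ZMod 8 × Fin 2) // IsMKSimplex s}

instance : Fintype MKSimplex := by unfold MKSimplex; infer_instance
instance : DecidableEq MKSimplex := by unfold MKSimplex; infer_instance

/-- The connection matrix of `MK`: `L x y = 1` if the simplices `x` and `y`
intersect, and `0` otherwise. -/
def connL : Matrix MKSimplex MKSimplex ℤ :=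
  fun x y => if (x.val ∩ y.val).Nonempty then 1 else 0

def sList : List (Finset (ZMod 8 × Fin 2)) := [
  {((1:ZMod 8),(1:Fin 2)), ((4:ZMod 8),(1:Fin 2))},
  {((1:ZMod 8),(0:Fin 2)), ((2:ZMod 8),(0:Fin 2))},
  {((0:ZMod 8),(1:Fin 2))},
  {((5:ZMod 8),(0:Fin 2)), ((5:ZMod 8),(1:Fin 2))},
  {((2:ZMod 8),(1:Fin 2)), ((7:ZMod 8),(1:Fin 2))},
  {((3:ZMod 8),(1:Fin 2))},
  {((0:ZMod 8),(0:Fin 2))},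
  {((3:ZMod 8),(0:Fin 2)), ((4:ZMod 8),(0:Fin 2))},
  {((4:ZMod 8),(1:Fin 2)), ((7:ZMod 8),(1:Fin 2))},
  {((6:ZMod 8),(0:Fin 2)), ((7:ZMod 8),(0:Fin 2))},
  {((1:ZMod 8),(1:Fin 2)), ((6:ZMod 8),(1:Fin 2))},
  {((0:ZMod 8),(1:Fin 2)), ((3:ZMod 8),(1:Fin 2))},
  {((1:ZMod 8),(0:Fin 2)), ((1:ZMod 8),(1:Fin 2))},
  {((0:ZMod 8),(1:Fin 2)), ((5:ZMod 8),(1:Fin 2))},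
  {((4:ZMod 8),(1:Fin 2))},
  {((2:ZMod 8),(0:Fin 2))},
  {((0:ZMod 8),(0:Fin 2)), ((7:ZMod 8),(0:Fin 2))},
  {((6:ZMod 8),(0:Fin 2))},
  {((3:ZMod 8),(0:Fin 2)), ((3:ZMod 8),(1:Fin 2))},
  {((2:ZMod 8),(1:Fin 2))},
  {((7:ZMod 8),(1:Fin 2))},
  {((7:ZMod 8),(0:Fin 2))},
  {((7:ZMod 8),(0:Fin 2)), ((7:ZMod 8),(1:Fin 2))},
  {((4:ZMod 8),(0:Fin 2)), ((5:ZMod 8),(0:Fin 2))},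
  {((0:ZMod 8),(0:Fin 2)), ((0:ZMod 8),(1:Fin 2))},
  {((1:ZMod 8),(0:Fin 2))},
  {((4:ZMod 8),(0:Fin 2)), ((4:ZMod 8),(1:Fin 2))},
  {((2:ZMod 8),(1:Fin 2)), ((5:ZMod 8),(1:Fin 2))},
  {((4:ZMod 8),(0:Fin 2))},
  {((6:ZMod 8),(0:Fin 2)), ((6:ZMod 8),(1:Fin 2))},
  {((2:ZMod 8),(0:Fin 2)), ((2:ZMod 8),(1:Fin 2))},
  {((0:ZMod 8),(0:Fin 2)), ((1:ZMod 8),(0:Fin 2))},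
  {((5:ZMod 8),(1:Fin 2))},
  {((5:ZMod 8),(0:Fin 2))},
  {((3:ZMod 8),(0:Fin 2))},
  {((2:ZMod 8),(0:Fin 2)), ((3:ZMod 8),(0:Fin 2))},
  {((5:ZMod 8),(0:Fin 2)), ((6:ZMod 8),(0:Fin 2))},
  {((1:ZMod 8),(1:Fin 2))},
  {((6:ZMod 8),(1:Fin 2))},
  {((3:ZMod 8),(1:Fin 2)), ((6:ZMod 8),(1:Fin 2))}]

lemma sList_isSimplex : ∀ i : Fin sList.length, IsMKSimplex (sList.get i) := by decide

def fMK (i : Fin 40) : MKSimplex :=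
  ⟨sList.get (i.cast (by decide : (40:ℕ) = sList.length)), sList_isSimplex _⟩

lemma fMK_inj : Function.Injective fMK := by decide

lemma mem_sList_of_simplex : ∀ s : Finset (ZMod 8 × Fin 2), IsMKSimplex s → s ∈ sList := by
  intro s hs
  rcases hs with h1 | ⟨a, b, hab, rfl⟩
  · obtain ⟨v, rfl⟩ := Finset.card_eq_one.mp h1
    revert v; decide
  · revert hab; revert a b; decide

lemma fMK_surj : Function.Surjective fMK := by
  rintro ⟨s, hs⟩
  obtain ⟨i, hi⟩ := List.mem_iff_get.mp (mem_sList_of_simplex s hs)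
  exact ⟨i.cast (by decide), Subtype.ext hi⟩

noncomputable def eMK : Fin 40 ≃ MKSimplex := Equiv.ofBijective fMK ⟨fMK_inj, fMK_surj⟩

def mkMat (l : List (List ℤ)) : Matrix (Fin 40) (Fin 40) ℤ :=
  Matrix.of fun i j => (l.getD i.val []).getD j.val 0

def Lmat : Matrix (Fin 40) (Fin 40) ℤ := mkMat [
  [1, 0, 0, 0, 0, 0, 0, 0, 0, 0, 0, 0, 0, 0, 0, 0, 0, 0, 0, 0, 0, 0, 0, 0, 0, 0, 0, 0, 0, 0, 0, 0, 0, 0, 0, 0, 0, 0, 0, 0],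
  [0, 1, 0, 0, 0, 0, 0, 0, 0, 0, 0, 0, 0, 0, 0, 0, 0, 0, 0, 0, 0, 0, 0, 0, 0, 0, 0, 0, 0, 0, 0, 0, 0, 0, 0, 0, 0, 0, 0, 0],
  [0, 0, 1, 0, 0, 0, 0, 0, 0, 0, 0, 0, 0, 0, 0, 0, 0, 0, 0, 0, 0, 0, 0, 0, 0, 0, 0, 0, 0, 0, 0, 0, 0, 0, 0, 0, 0, 0, 0, 0],
  [0, 0, 0, 1, 0, 0, 0, 0, 0, 0, 0, 0, 0, 0, 0, 0, 0, 0, 0, 0, 0, 0, 0, 0, 0, 0, 0, 0, 0, 0, 0, 0, 0, 0, 0, 0, 0, 0, 0, 0],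
  [0, 0, 0, 0, 1, 0, 0, 0, 0, 0, 0, 0, 0, 0, 0, 0, 0, 0, 0, 0, 0, 0, 0, 0, 0, 0, 0, 0, 0, 0, 0, 0, 0, 0, 0, 0, 0, 0, 0, 0],
  [0, 0, 0, 0, 0, 1, 0, 0, 0, 0, 0, 0, 0, 0, 0, 0, 0, 0, 0, 0, 0, 0, 0, 0, 0, 0, 0, 0, 0, 0, 0, 0, 0, 0, 0, 0, 0, 0, 0, 0],
  [0, 0, 0, 0, 0, 0, 1, 0, 0, 0, 0, 0, 0, 0, 0, 0, 0, 0, 0, 0, 0, 0, 0, 0, 0, 0, 0, 0, 0, 0, 0, 0, 0, 0, 0, 0, 0, 0, 0, 0],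
  [0, 0, 0, 0, 0, 0, 0, 1, 0, 0, 0, 0, 0, 0, 0, 0, 0, 0, 0, 0, 0, 0, 0, 0, 0, 0, 0, 0, 0, 0, 0, 0, 0, 0, 0, 0, 0, 0, 0, 0],
  [1, 0, 0, 0, 1, 0, 0, 0, 1, 0, 0, 0, 0, 0, 0, 0, 0, 0, 0, 0, 0, 0, 0, 0, 0, 0, 0, 0, 0, 0, 0, 0, 0, 0, 0, 0, 0, 0, 0, 0],
  [0, 0, 0, 0, 0, 0, 0, 0, 0, 1, 0, 0, 0, 0, 0, 0, 0, 0, 0, 0, 0, 0, 0, 0, 0, 0, 0, 0, 0, 0, 0, 0, 0, 0, 0, 0, 0, 0, 0, 0],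
  [1, 0, 0, 0, 0, 0, 0, 0, 1, 0, 1, 0, 0, 0, 0, 0, 0, 0, 0, 0, 0, 0, 0, 0, 0, 0, 0, 0, 0, 0, 0, 0, 0, 0, 0, 0, 0, 0, 0, 0],
  [0, 0, 1, 0, 0, 1, 0, 0, 0, 0, 0, 1, 0, 0, 0, 0, 0, 0, 0, 0, 0, 0, 0, 0, 0, 0, 0, 0, 0, 0, 0, 0, 0, 0, 0, 0, 0, 0, 0, 0],
  [1, 1, 0, 0, 0, 0, 0, 0, 1, 0, 1, 0, 1, 0, 0, 0, 0, 0, 0, 0, 0, 0, 0, 0, 0, 0, 0, 0, 0, 0, 0, 0, 0, 0, 0, 0, 0, 0, 0, 0],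
  [0, 0, 1, 1, 0, 0, 0, 0, 0, 0, 0, 0, 0, 1, 0, 0, 0, 0, 0, 0, 0, 0, 0, 0, 0, 0, 0, 0, 0, 0, 0, 0, 0, 0, 0, 0, 0, 0, 0, 0],
  [1, 0, 0, 0, 0, 0, 0, 0, 0, 0, -1, 0, 0, 0, 1, 0, 0, 0, 0, 0, 0, 0, 0, 0, 0, 0, 0, 0, 0, 0, 0, 0, 0, 0, 0, 0, 0, 0, 0, 0],
  [0, 1, 0, 0, 0, 0, 0, 0, 0, 0, 0, 0, 1, 0, 0, 1, 0, 0, 0, 0, 0, 0, 0, 0, 0, 0, 0, 0, 0, 0, 0, 0, 0, 0, 0, 0, 0, 0, 0, 0],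
  [0, 0, 0, 0, 0, 0, 1, 0, 0, 1, 0, 0, 0, 0, 0, 0, 1, 0, 0, 0, 0, 0, 0, 0, 0, 0, 0, 0, 0, 0, 0, 0, 0, 0, 0, 0, 0, 0, 0, 0],
  [0, 0, 0, 0, 0, 0, 0, 0, 0, 1, 0, 0, 0, 0, 0, 0, 1, 1, 0, 0, 0, 0, 0, 0, 0, 0, 0, 0, 0, 0, 0, 0, 0, 0, 0, 0, 0, 0, 0, 0],
  [0, 0, 0, 0, 0, 1, 0, 1, 0, 0, 0, 0, 0, 0, 0, 0, 0, 0, 1, 0, 0, 0, 0, 0, 0, 0, 0, 0, 0, 0, 0, 0, 0, 0, 0, 0, 0, 0, 0, 0],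
  [0, 0, 0, 0, 1, 0, 0, 0, 1, 0, 1, 0, 0, 0, -1, 0, 0, 0, 0, 1, 0, 0, 0, 0, 0, 0, 0, 0, 0, 0, 0, 0, 0, 0, 0, 0, 0, 0, 0, 0],
  [0, 0, 0, 0, 1, 0, 0, 0, 0, 0, 0, 0, 0, 0, 0, 0, 0, 0, 0, -1, 1, 0, 0, 0, 0, 0, 0, 0, 0, 0, 0, 0, 0, 0, 0, 0, 0, 0, 0, 0],
  [0, 0, 0, 0, 0, 0, 0, 0, 0, 1, 0, 0, 0, 0, 0, 0, 0, -1, 0, 0, 0, 1, 0, 0, 0, 0, 0, 0, 0, 0, 0, 0, 0, 0, 0, 0, 0, 0, 0, 0],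
  [0, 0, 0, 0, 1, 0, 0, 0, 0, 1, 0, 0, 0, 0, 0, 0, 0, -1, 0, -1, 1, 1, 1, 0, 0, 0, 0, 0, 0, 0, 0, 0, 0, 0, 0, 0, 0, 0, 0, 0],
  [0, 0, 0, 1, 0, 0, 0, 1, 0, 0, 0, 0, 0, 1, 0, 0, 0, 0, 1, 0, 0, 0, 0, 1, 0, 0, 0, 0, 0, 0, 0, 0, 0, 0, 0, 0, 0, 0, 0, 0],
  [0, 0, 1, 0, 0, 0, 1, 0, 0, 0, 0, 0, 0, 0, 0, 0, 0, 0, 0, 0, 0, 0, 0, 0, 1, 0, 0, 0, 0, 0, 0, 0, 0, 0, 0, 0, 0, 0, 0, 0],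
  [0, 1, 0, 0, 0, 0, 0, 0, 0, 0, 0, 0, 0, 0, 0, -1, 0, 0, 0, 0, 0, 0, 0, 0, 0, 1, 0, 0, 0, 0, 0, 0, 0, 0, 0, 0, 0, 0, 0, 0],
  [1, 0, 0, 0, 0, 0, 0, 1, 0, 0, -1, 0, 0, 0, 1, 0, 0, 0, 1, 0, 0, 0, 0, 1, 0, 0, 1, 0, 0, 0, 0, 0, 0, 0, 0, 0, 0, 0, 0, 0],
  [0, 0, 0, 1, 1, 0, 0, 0, 1, 0, 1, 0, 0, 0, -1, 0, 0, 0, 0, 1, 0, 0, 0, -1, 0, 0, -1, 1, 0, 0, 0, 0, 0, 0, 0, 0, 0, 0, 0, 0],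
  [0, 0, 0, 0, 0, 0, 0, 1, 0, 0, 0, 0, 0, 0, 0, 0, 0, 0, 1, 0, 0, 0, 0, 1, 0, 0, 0, -1, 1, 0, 0, 0, 0, 0, 0, 0, 0, 0, 0, 0],
  [0, 0, 0, 0, 0, 0, 0, 0, 0, 1, 1, 0, 1, 0, -1, 1, 1, 1, 0, 0, 0, 0, 0, 0, 0, -1, 0, 0, 0, 1, 0, 0, 0, 0, 0, 0, 0, 0, 0, 0],
  [0, 1, 0, 0, 1, 0, 0, 0, 1, 0, 1, 0, 1, 0, -1, 1, 0, 0, 0, 1, 0, 0, 0, 0, 0, 0, 0, 0, 0, 0, 1, 0, 0, 0, 0, 0, 0, 0, 0, 0],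
  [0, 1, 0, 0, 0, 0, 1, 0, 0, 0, 0, 0, 0, 0, 0, -1, 0, 0, 0, 0, 0, 0, 0, 0, 0, 1, 0, 0, 0, 0, 0, 1, 0, 0, 0, 0, 0, 0, 0, 0],
  [0, 0, 0, 1, 0, 0, 0, 0, 0, 0, 0, 0, 0, 0, 0, 0, 0, 0, 0, 0, 0, 0, 0, -1, 0, 0, -1, 0, 1, 0, 0, 0, 1, 0, 0, 0, 0, 0, 0, 0],
  [0, 0, 0, 1, 0, 0, 0, 0, 0, 0, 0, 0, 0, 1, 0, 0, 0, 0, 0, 0, 0, 0, 0, 1, 0, 0, 1, 1, -2, 0, 0, 0, -1, 1, 0, 0, 0, 0, 0, 0],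
  [0, 0, 0, 0, 0, 0, 0, 1, 0, 0, 0, 0, 0, 0, 0, 0, 0, 0, 0, 0, 0, 0, 0, -1, 0, 0, 0, 1, -1, 0, 0, 0, 0, 0, 1, 0, 0, 0, 0, 0],
  [0, 1, 0, 0, 0, 0, 0, 1, 0, 0, 0, 0, 1, 0, 0, 1, 0, 0, 0, 0, 0, 0, 0, -1, 0, 0, 0, 1, -1, 0, 0, 0, 0, 0, 1, 1, 0, 0, 0, 0],
  [0, 0, 0, 1, 0, 0, 0, 0, 0, 1, 0, 0, 0, 1, 0, 0, 1, 1, 0, 0, 0, 0, 0, 1, 0, 0, 1, 1, -2, 0, 0, 0, -1, 1, 0, 0, 1, 0, 0, 0],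
  [1, 0, 0, 0, 0, 0, 0, 0, 1, 0, 1, 0, 0, 0, 0, 0, 0, 0, 0, 0, 0, 0, 0, 0, 0, 0, 0, 0, 0, -1, 0, 0, 0, 0, 0, 0, 0, 1, 0, 0],
  [0, 0, 0, 0, 0, 0, 0, 0, 0, 0, 1, 0, 1, 0, -1, 1, 0, 0, 0, 0, 0, 0, 0, 0, 0, -1, 0, 0, 0, 2, 0, 0, 0, 0, 0, 0, 0, -1, 1, 0],
  [0, 0, 0, 0, 0, 1, 0, 0, 0, 0, 1, 0, 1, 0, -1, 1, 0, 0, 0, 0, 0, 0, 0, 0, 0, -1, 0, 0, 0, 2, 0, 0, 0, 0, 0, 0, 0, -1, 1, 1]]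

def Umat : Matrix (Fin 40) (Fin 40) ℤ := mkMat [
  [1, 0, 0, 0, 0, 0, 0, 0, 1, 0, 1, 0, 1, 0, 1, 0, 0, 0, 0, 0, 0, 0, 0, 0, 0, 0, 1, 0, 0, 0, 0, 0, 0, 0, 0, 0, 0, 1, 0, 0],
  [0, 1, 0, 0, 0, 0, 0, 0, 0, 0, 0, 0, 1, 0, 0, 1, 0, 0, 0, 0, 0, 0, 0, 0, 0, 1, 0, 0, 0, 0, 1, 1, 0, 0, 0, 1, 0, 0, 0, 0],
  [0, 0, 1, 0, 0, 0, 0, 0, 0, 0, 0, 1, 0, 1, 0, 0, 0, 0, 0, 0, 0, 0, 0, 0, 1, 0, 0, 0, 0, 0, 0, 0, 0, 0, 0, 0, 0, 0, 0, 0],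
  [0, 0, 0, 1, 0, 0, 0, 0, 0, 0, 0, 0, 0, 1, 0, 0, 0, 0, 0, 0, 0, 0, 0, 1, 0, 0, 0, 1, 0, 0, 0, 0, 1, 1, 0, 0, 1, 0, 0, 0],
  [0, 0, 0, 0, 1, 0, 0, 0, 1, 0, 0, 0, 0, 0, 0, 0, 0, 0, 0, 1, 1, 0, 1, 0, 0, 0, 0, 1, 0, 0, 1, 0, 0, 0, 0, 0, 0, 0, 0, 0],
  [0, 0, 0, 0, 0, 1, 0, 0, 0, 0, 0, 1, 0, 0, 0, 0, 0, 0, 1, 0, 0, 0, 0, 0, 0, 0, 0, 0, 0, 0, 0, 0, 0, 0, 0, 0, 0, 0, 0, 1],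
  [0, 0, 0, 0, 0, 0, 1, 0, 0, 0, 0, 0, 0, 0, 0, 0, 1, 0, 0, 0, 0, 0, 0, 0, 1, 0, 0, 0, 0, 0, 0, 1, 0, 0, 0, 0, 0, 0, 0, 0],
  [0, 0, 0, 0, 0, 0, 0, 1, 0, 0, 0, 0, 0, 0, 0, 0, 0, 0, 1, 0, 0, 0, 0, 1, 0, 0, 1, 0, 1, 0, 0, 0, 0, 0, 1, 1, 0, 0, 0, 0],
  [0, 0, 0, 0, 0, 0, 0, 0, -1, 0, -1, 0, -1, 0, 0, 0, 0, 0, 0, -1, 0, 0, 0, 0, 0, 0, 0, -1, 0, 0, -1, 0, 0, 0, 0, 0, 0, -1, 0, 0],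
  [0, 0, 0, 0, 0, 0, 0, 0, 0, 1, 0, 0, 0, 0, 0, 0, 1, 1, 0, 0, 0, 1, 1, 0, 0, 0, 0, 0, 0, 1, 0, 0, 0, 0, 0, 0, 1, 0, 0, 0],
  [0, 0, 0, 0, 0, 0, 0, 0, 0, 0, 1, 0, 1, 0, -1, 0, 0, 0, 0, 1, 0, 0, 0, 0, 0, 0, -1, 1, 0, 1, 1, 0, 0, 0, 0, 0, 0, 1, 1, 1],
  [0, 0, 0, 0, 0, 0, 0, 0, 0, 0, 0, -1, 0, 0, 0, 0, 0, 0, 0, 0, 0, 0, 0, 0, 0, 0, 0, 0, 0, 0, 0, 0, 0, 0, 0, 0, 0, 0, 0, 0],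
  [0, 0, 0, 0, 0, 0, 0, 0, 0, 0, 0, 0, -1, 0, 0, -1, 0, 0, 0, 0, 0, 0, 0, 0, 0, 0, 0, 0, 0, -1, -1, 0, 0, 0, 0, -1, 0, 0, -1, -1],
  [0, 0, 0, 0, 0, 0, 0, 0, 0, 0, 0, 0, 0, -1, 0, 0, 0, 0, 0, 0, 0, 0, 0, -1, 0, 0, 0, 0, 0, 0, 0, 0, 0, -1, 0, 0, -1, 0, 0, 0],
  [0, 0, 0, 0, 0, 0, 0, 0, 0, 0, 0, 0, 0, 0, -1, 0, 0, 0, 0, 1, 0, 0, 0, 0, 0, 0, -1, 1, 0, 1, 1, 0, 0, 0, 0, 0, 0, 0, 1, 1],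
  [0, 0, 0, 0, 0, 0, 0, 0, 0, 0, 0, 0, 0, 0, 0, 1, 0, 0, 0, 0, 0, 0, 0, 0, 0, -1, 0, 0, 0, 1, 1, -1, 0, 0, 0, 1, 0, 0, 1, 1],
  [0, 0, 0, 0, 0, 0, 0, 0, 0, 0, 0, 0, 0, 0, 0, 0, -1, -1, 0, 0, 0, 0, 0, 0, 0, 0, 0, 0, 0, -1, 0, 0, 0, 0, 0, 0, -1, 0, 0, 0],
  [0, 0, 0, 0, 0, 0, 0, 0, 0, 0, 0, 0, 0, 0, 0, 0, 0, 1, 0, 0, 0, -1, -1, 0, 0, 0, 0, 0, 0, 1, 0, 0, 0, 0, 0, 0, 1, 0, 0, 0],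
  [0, 0, 0, 0, 0, 0, 0, 0, 0, 0, 0, 0, 0, 0, 0, 0, 0, 0, -1, 0, 0, 0, 0, -1, 0, 0, -1, 0, -1, 0, 0, 0, 0, 0, 0, 0, 0, 0, 0, 0],
  [0, 0, 0, 0, 0, 0, 0, 0, 0, 0, 0, 0, 0, 0, 0, 0, 0, 0, 0, 1, -1, 0, -1, 0, 0, 0, 0, 1, 0, 0, 1, 0, 0, 0, 0, 0, 0, 0, 0, 0],
  [0, 0, 0, 0, 0, 0, 0, 0, 0, 0, 0, 0, 0, 0, 0, 0, 0, 0, 0, 0, -1, 0, -1, 0, 0, 0, 0, 0, 0, 0, 0, 0, 0, 0, 0, 0, 0, 0, 0, 0],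
  [0, 0, 0, 0, 0, 0, 0, 0, 0, 0, 0, 0, 0, 0, 0, 0, 0, 0, 0, 0, 0, -1, -1, 0, 0, 0, 0, 0, 0, 0, 0, 0, 0, 0, 0, 0, 0, 0, 0, 0],
  [0, 0, 0, 0, 0, 0, 0, 0, 0, 0, 0, 0, 0, 0, 0, 0, 0, 0, 0, 0, 0, 0, -1, 0, 0, 0, 0, 0, 0, 0, 0, 0, 0, 0, 0, 0, 0, 0, 0, 0],
  [0, 0, 0, 0, 0, 0, 0, 0, 0, 0, 0, 0, 0, 0, 0, 0, 0, 0, 0, 0, 0, 0, 0, 1, 0, 0, 1, -1, 1, 0, 0, 0, -1, 1, -1, -1, 1, 0, 0, 0],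
  [0, 0, 0, 0, 0, 0, 0, 0, 0, 0, 0, 0, 0, 0, 0, 0, 0, 0, 0, 0, 0, 0, 0, 0, -1, 0, 0, 0, 0, 0, 0, 0, 0, 0, 0, 0, 0, 0, 0, 0],
  [0, 0, 0, 0, 0, 0, 0, 0, 0, 0, 0, 0, 0, 0, 0, 0, 0, 0, 0, 0, 0, 0, 0, 0, 0, -1, 0, 0, 0, 1, 0, -1, 0, 0, 0, 0, 0, 0, 1, 1],
  [0, 0, 0, 0, 0, 0, 0, 0, 0, 0, 0, 0, 0, 0, 0, 0, 0, 0, 0, 0, 0, 0, 0, 0, 0, 0, -1, 1, 0, 0, 0, 0, 1, -1, 0, 0, -1, 0, 0, 0],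
  [0, 0, 0, 0, 0, 0, 0, 0, 0, 0, 0, 0, 0, 0, 0, 0, 0, 0, 0, 0, 0, 0, 0, 0, 0, 0, 0, -1, 1, 0, 0, 0, 0, -1, -1, -1, -1, 0, 0, 0],
  [0, 0, 0, 0, 0, 0, 0, 0, 0, 0, 0, 0, 0, 0, 0, 0, 0, 0, 0, 0, 0, 0, 0, 0, 0, 0, 0, 0, 1, 0, 0, 0, 1, -2, -1, -1, -2, 0, 0, 0],
  [0, 0, 0, 0, 0, 0, 0, 0, 0, 0, 0, 0, 0, 0, 0, 0, 0, 0, 0, 0, 0, 0, 0, 0, 0, 0, 0, 0, 0, 1, 0, 0, 0, 0, 0, 0, 0, -1, 2, 2],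
  [0, 0, 0, 0, 0, 0, 0, 0, 0, 0, 0, 0, 0, 0, 0, 0, 0, 0, 0, 0, 0, 0, 0, 0, 0, 0, 0, 0, 0, 0, -1, 0, 0, 0, 0, 0, 0, 0, 0, 0],
  [0, 0, 0, 0, 0, 0, 0, 0, 0, 0, 0, 0, 0, 0, 0, 0, 0, 0, 0, 0, 0, 0, 0, 0, 0, 0, 0, 0, 0, 0, 0, -1, 0, 0, 0, 0, 0, 0, 0, 0],
  [0, 0, 0, 0, 0, 0, 0, 0, 0, 0, 0, 0, 0, 0, 0, 0, 0, 0, 0, 0, 0, 0, 0, 0, 0, 0, 0, 0, 0, 0, 0, 0, -1, 1, 0, 0, 1, 0, 0, 0],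
  [0, 0, 0, 0, 0, 0, 0, 0, 0, 0, 0, 0, 0, 0, 0, 0, 0, 0, 0, 0, 0, 0, 0, 0, 0, 0, 0, 0, 0, 0, 0, 0, 0, -1, 0, 0, -1, 0, 0, 0],
  [0, 0, 0, 0, 0, 0, 0, 0, 0, 0, 0, 0, 0, 0, 0, 0, 0, 0, 0, 0, 0, 0, 0, 0, 0, 0, 0, 0, 0, 0, 0, 0, 0, 0, -1, -1, 0, 0, 0, 0],
  [0, 0, 0, 0, 0, 0, 0, 0, 0, 0, 0, 0, 0, 0, 0, 0, 0, 0, 0, 0, 0, 0, 0, 0, 0, 0, 0, 0, 0, 0, 0, 0, 0, 0, 0, -1, 0, 0, 0, 0],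
  [0, 0, 0, 0, 0, 0, 0, 0, 0, 0, 0, 0, 0, 0, 0, 0, 0, 0, 0, 0, 0, 0, 0, 0, 0, 0, 0, 0, 0, 0, 0, 0, 0, 0, 0, 0, -1, 0, 0, 0],
  [0, 0, 0, 0, 0, 0, 0, 0, 0, 0, 0, 0, 0, 0, 0, 0, 0, 0, 0, 0, 0, 0, 0, 0, 0, 0, 0, 0, 0, 0, 0, 0, 0, 0, 0, 0, 0, -1, 1, 1],
  [0, 0, 0, 0, 0, 0, 0, 0, 0, 0, 0, 0, 0, 0, 0, 0, 0, 0, 0, 0, 0, 0, 0, 0, 0, 0, 0, 0, 0, 0, 0, 0, 0, 0, 0, 0, 0, 0, -1, -1],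
  [0, 0, 0, 0, 0, 0, 0, 0, 0, 0, 0, 0, 0, 0, 0, 0, 0, 0, 0, 0, 0, 0, 0, 0, 0, 0, 0, 0, 0, 0, 0, 0, 0, 0, 0, 0, 0, 0, 0, -1]]

set_option maxRecDepth 40000 in
set_option maxHeartbeats 4000000 in
lemma submatrix_eq : connL.submatrix eMK eMK = Lmat * Umat := by decide

lemma Lmat_lower : ∀ i j : Fin 40, i < j → Lmat i j = 0 := by
  exact @of_decide_eq_true _ (@Nat.decidableForallFin _ _ (fun i => @Nat.decidableForallFin _ _ (fun j => @forall_prop_decidable _ _ _ (fun _ => Int.instDecidableEq _ _)))) rfl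
lemma Umat_upper : ∀ i j : Fin 40, j < i → Umat i j = 0 := by
  exact @of_decide_eq_true _ (@Nat.decidableForallFin _ _ (fun i => @Nat.decidableForallFin _ _ (fun j => @forall_prop_decidable _ _ _ (fun _ => Int.instDecidableEq _ _)))) rfl
lemma Lmat_diag : (∏ i : Fin 40, Lmat i i) = 1 := by decide
lemma Umat_diag : (∏ i : Fin 40, Umat i i) = 1 := by decide

lemma detprod {m : ℕ} (A B : Matrix (Fin m) (Fin m) ℤ)
    (hA : ∀ i j : Fin m, i < j → A i j = 0) (hB : ∀ i j : Fin m, j < i → B i j = 0) :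
    (A * B).det = (∏ i, A i i) * ∏ i, B i i := by
  rw [Matrix.det_mul, Matrix.det_of_lowerTriangular A (fun i j h => hA i j h),
    Matrix.det_of_upperTriangular (fun i j h => hB i j h)]

lemma det_LU : (Lmat * Umat).det = 1 := by
  rw [detprod Lmat Umat Lmat_lower Umat_upper, Lmat_diag, Umat_diag]
  norm_num

/-- The connection matrix of the Möbius–Kantor graph is a unimodular 40×40 matrix with
determinant `1`, the Fermi characteristic `(+1)^16 * (-1)^24` of `MK`. -/
theorem connection_matrix_det_moebiusKantor :
    Fintype.card MKSimplex = 40 ∧ connL.det = 1 ∧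
    connL.det = ∏ x : MKSimplex, (-1 : ℤ) ^ (x.val.card - 1) := by
  have hdet : connL.det = 1 := by
    rw [← Matrix.det_submatrix_equiv_self eMK connL, submatrix_eq, det_LU]
  have hcard : Fintype.card MKSimplex = 40 := by
    rw [← Fintype.card_congr eMK, Fintype.card_fin]
  have hprod : (∏ x : MKSimplex, (-1 : ℤ) ^ (x.val.card - 1)) = 1 := by
    rw [← Equiv.prod_comp eMK (fun x : MKSimplex => (-1 : ℤ) ^ (x.val.card - 1))]
    decide
  exact ⟨hcard, hdet, hdet.trans hprod.symm⟩
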